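/- For every pair of initial states (x₀,y₀) ∈ ℕ², the two-point motion of the birth-death chain reaches the thick diagonal 𝔻 = {(x,y) ∈ ℕ² : |x − y| ≤ 1} almost surely in finite time; that is, for ℙ-a.e. q ∈ Q₊ there exists n ∈ ℕ with |φⁿ_q(x₀) − φⁿ_q(y₀)| ≤ 1. -/

import Mathlib

open MeasureTheory ProbabilityTheory Filter

/-- The birth-death transition map. -/
noncomputable def bdStep (γ₁ γ₂ : ℝ) (q : ℝ) (x : ℕ) : ℕ :=
  if q < γ₁ / (γ₁ + γ₂ * x) then x + 1 else x - 1

/-- The cocycle of the embedded birth-death chain. -/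
noncomputable def bdCocycle (γ₁ γ₂ : ℝ) (q : ℕ → ℝ) : ℕ → ℕ → ℕ
  | 0, x => x
  | n + 1, x => bdStep γ₁ γ₂ (q n) (bdCocycle γ₁ γ₂ q n x)

namespace BDaux

noncomputable def thr (γ₁ γ₂ : ℝ) (x : ℕ) : ℝ := γ₁ / (γ₁ + γ₂ * x)

noncomputable def bdN (γ₁ γ₂ : ℝ) : ℕ := ⌈3 * γ₁ / γ₂⌉₊

noncomputable def bdEps (γ₁ γ₂ : ℝ) : ℝ :=
  thr γ₁ γ₂ (bdN γ₁ γ₂) - thr γ₁ γ₂ (bdN γ₁ γ₂ + 2)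

noncomputable def bdC (γ₁ γ₂ : ℝ) : ℝ := 1 / bdEps γ₁ γ₂

variable {γ₁ γ₂ : ℝ} (hγ₁ : 0 < γ₁) (hγ₂ : 0 < γ₂)

include hγ₁ hγ₂

lemma denom_pos (x : ℕ) : 0 < γ₁ + γ₂ * x := by positivity

lemma thr_pos (x : ℕ) : 0 < thr γ₁ γ₂ x := div_pos hγ₁ (denom_pos hγ₁ hγ₂ x)

lemma thr_le_one (x : ℕ) : thr γ₁ γ₂ x ≤ 1 := by
  rw [thr, div_le_one (denom_pos hγ₁ hγ₂ x)]
  nlinarith [mul_nonneg hγ₂.le (Nat.cast_nonneg (α := ℝ) x)]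

lemma thr_anti {x y : ℕ} (h : x ≤ y) : thr γ₁ γ₂ y ≤ thr γ₁ γ₂ x := by
  have : (x : ℝ) ≤ y := by exact_mod_cast h
  unfold thr
  gcongr

omit hγ₂ in
lemma thr_zero : thr γ₁ γ₂ 0 = 1 := by
  simp [thr, hγ₁.ne']

lemma thr_diff (x : ℕ) :
    thr γ₁ γ₂ x - thr γ₁ γ₂ (x + 2) =
      2 * γ₁ * γ₂ / ((γ₁ + γ₂ * x) * (γ₁ + γ₂ * x + 2 * γ₂)) := by
  have h1 : (0:ℝ) < γ₁ + γ₂ * x := denom_pos hγ₁ hγ₂ x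
  have h2 : (0:ℝ) < γ₁ + γ₂ * x + 2 * γ₂ := by positivity
  have e : γ₁ + γ₂ * ((x:ℝ) + 2) = γ₁ + γ₂ * x + 2 * γ₂ := by ring
  rw [thr, thr]
  push_cast
  rw [e, div_sub_div _ _ h1.ne' h2.ne',
    show γ₁ * (γ₁ + γ₂ * ↑x + 2 * γ₂) - (γ₁ + γ₂ * ↑x) * γ₁ = 2 * γ₁ * γ₂ by ring]

lemma bdEps_pos : 0 < bdEps γ₁ γ₂ := by
  rw [bdEps, thr_diff hγ₁ hγ₂]
  positivity

lemma bdC_pos : 0 < bdC γ₁ γ₂ := by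
  rw [bdC]
  exact div_pos one_pos (bdEps_pos hγ₁ hγ₂)

lemma thr_diff_ge {x : ℕ} (hx : x ≤ bdN γ₁ γ₂) :
    bdEps γ₁ γ₂ ≤ thr γ₁ γ₂ x - thr γ₁ γ₂ (x + 2) := by
  rw [bdEps, thr_diff hγ₁ hγ₂, thr_diff hγ₁ hγ₂]
  have hxN : (x : ℝ) ≤ (bdN γ₁ γ₂ : ℝ) := by exact_mod_cast hx
  have h1 : (0:ℝ) < γ₁ + γ₂ * x := denom_pos hγ₁ hγ₂ x
  have h2 : (0:ℝ) < γ₁ + γ₂ * x + 2 * γ₂ := by positivity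
  apply div_le_div_of_nonneg_left (by positivity) (by positivity)
  nlinarith [mul_le_mul_of_nonneg_left hxN hγ₂.le, sq_nonneg ((bdN γ₁ γ₂ : ℝ) - x)]

lemma thr_quarter {x : ℕ} (hx : bdN γ₁ γ₂ + 1 ≤ x) : thr γ₁ γ₂ x ≤ 1 / 4 := by
  have hN : 3 * γ₁ / γ₂ ≤ (bdN γ₁ γ₂ : ℝ) := Nat.le_ceil _
  have hxN : (bdN γ₁ γ₂ : ℝ) + 1 ≤ (x : ℝ) := by exact_mod_cast hx
  have h3 : 3 * γ₁ ≤ γ₂ * (bdN γ₁ γ₂ : ℝ) := by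
    rw [div_le_iff₀ hγ₂] at hN; nlinarith
  rw [thr, div_le_div_iff₀ (denom_pos hγ₁ hγ₂ x) (by norm_num)]
  nlinarith [mul_le_mul_of_nonneg_left hxN hγ₂.le]

/-- The scalar drift estimate. -/
lemma drift_scalar {x y : ℕ} (hxy : x + 2 ≤ y) :
    thr γ₁ γ₂ y * 1 + (thr γ₁ γ₂ x - thr γ₁ γ₂ y) * (1 - 2 * bdC γ₁ γ₂)
      + (1 - thr γ₁ γ₂ x) * (if x = 0 then -bdC γ₁ γ₂ else -1) ≤ -(1/2) := by
  set C := bdC γ₁ γ₂ with hC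
  have hCpos := bdC_pos hγ₁ hγ₂
  have hεpos := bdEps_pos hγ₁ hγ₂
  have hCε : C * bdEps γ₁ γ₂ = 1 := by
    rw [hC, bdC]; field_simp
  have hb_le_a : thr γ₁ γ₂ y ≤ thr γ₁ γ₂ x := thr_anti hγ₁ hγ₂ (by omega)
  have ha_le1 : thr γ₁ γ₂ x ≤ 1 := thr_le_one hγ₁ hγ₂ x
  by_cases hxN : x ≤ bdN γ₁ γ₂
  · -- small x: the middle interval has length ≥ ε
    have hmid : bdEps γ₁ γ₂ ≤ thr γ₁ γ₂ x - thr γ₁ γ₂ y := by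
      have := thr_diff_ge hγ₁ hγ₂ hxN
      have h2 : thr γ₁ γ₂ y ≤ thr γ₁ γ₂ (x + 2) := thr_anti hγ₁ hγ₂ hxy
      linarith
    have hkey : 2 * C * (thr γ₁ γ₂ x - thr γ₁ γ₂ y) ≥ 2 := by
      have := mul_le_mul_of_nonneg_left hmid (by linarith : (0:ℝ) ≤ 2 * C)
      calc (2:ℝ) = 2 * (C * bdEps γ₁ γ₂) := by rw [hCε]; ring
        _ ≤ 2 * C * (thr γ₁ γ₂ x - thr γ₁ γ₂ y) := by nlinarith
    by_cases hx0 : x = 0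
    · subst hx0
      simp only [if_pos rfl]
      have ha1 : thr γ₁ γ₂ 0 = 1 := thr_zero hγ₁
      rw [ha1] at hkey ⊢
      nlinarith
    · simp only [if_neg hx0]
      nlinarith
  · -- large x: thr x ≤ 1/4
    have ha4 : thr γ₁ γ₂ x ≤ 1 / 4 := thr_quarter hγ₁ hγ₂ (by omega)
    have hx0 : x ≠ 0 := by
      intro h; subst h
      rw [thr_zero hγ₁] at ha4; norm_num at ha4
    simp only [if_neg hx0]
    nlinarith

end BDaux
-- step and cocycle lemmas, measurability & factorization
namespace BDaux2
open BDaux MeasureTheory ProbabilityTheory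

variable {γ₁ γ₂ : ℝ}

lemma bdStep_up {q : ℝ} {x : ℕ} (h : q < thr γ₁ γ₂ x) : bdStep γ₁ γ₂ q x = x + 1 :=
  if_pos h

lemma bdStep_down {q : ℝ} {x : ℕ} (h : thr γ₁ γ₂ x ≤ q) : bdStep γ₁ γ₂ q x = x - 1 :=
  if_neg (not_lt.2 h)

lemma bdStep_le (q : ℝ) (x : ℕ) : bdStep γ₁ γ₂ q x ≤ x + 1 := by
  rw [bdStep]; split <;> omega

lemma bdStep_ge (q : ℝ) (x : ℕ) : x - 1 ≤ bdStep γ₁ γ₂ q x := by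
  rw [bdStep]; split <;> omega

lemma bdStep_cases (q : ℝ) (x : ℕ) :
    bdStep γ₁ γ₂ q x = x + 1 ∨ bdStep γ₁ γ₂ q x = x - 1 := by
  rw [bdStep]; split <;> simp

/-- order is essentially preserved across one step when the gap is ≥ 2 -/
lemma gap_step (q : ℝ) {x y : ℕ} (h : x + 2 ≤ y) :
    bdStep γ₁ γ₂ q x ≤ bdStep γ₁ γ₂ q y := by
  have h1 := bdStep_le (γ₁ := γ₁) (γ₂ := γ₂) q x
  have h2 := bdStep_ge (γ₁ := γ₁) (γ₂ := γ₂) q y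
  omega

@[simp] lemma bdCocycle_zero (q : ℕ → ℝ) (x : ℕ) : bdCocycle γ₁ γ₂ q 0 x = x := rfl

lemma bdCocycle_succ (q : ℕ → ℝ) (n x : ℕ) :
    bdCocycle γ₁ γ₂ q (n + 1) x = bdStep γ₁ γ₂ (q n) (bdCocycle γ₁ γ₂ q n x) := rfl

lemma bdCocycle_le (q : ℕ → ℝ) (n x : ℕ) : bdCocycle γ₁ γ₂ q n x ≤ x + n := by
  induction n with
  | zero => simp
  | succ n ih =>
    have := bdStep_le (γ₁ := γ₁) (γ₂ := γ₂) (q n) (bdCocycle γ₁ γ₂ q n x)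
    rw [bdCocycle_succ]
    omega

lemma measurable_bdStep_comp {α : Type*} [MeasurableSpace α] {u : α → ℝ} {w : α → ℕ}
    (hu : Measurable u) (hw : Measurable w) :
    Measurable (fun a => bdStep γ₁ γ₂ (u a) (w a)) := by
  have hrw : (fun a => bdStep γ₁ γ₂ (u a) (w a)) =
      fun a => if u a < thr γ₁ γ₂ (w a) then w a + 1 else w a - 1 := rfl
  rw [hrw]
  have hset : MeasurableSet {a | u a < thr γ₁ γ₂ (w a)} := by
    have : {a | u a < thr γ₁ γ₂ (w a)} =
        ⋃ v : ℕ, (w ⁻¹' {v} ∩ {a | u a < thr γ₁ γ₂ v}) := by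
      ext a
      simp only [Set.mem_setOf_eq, Set.mem_iUnion, Set.mem_inter_iff, Set.mem_preimage,
        Set.mem_singleton_iff]
      exact ⟨fun h => ⟨w a, rfl, h⟩, fun ⟨v, hv, h⟩ => by rw [hv]; exact h⟩
    rw [this]
    exact MeasurableSet.iUnion fun v =>
      (hw (measurableSet_singleton v)).inter (measurableSet_lt hu measurable_const)
  exact Measurable.ite hset
    ((measurable_from_top (f := fun m : ℕ => m + 1)).comp hw)
    ((measurable_from_top (f := fun m : ℕ => m - 1)).comp hw)

/-- The time-`k` cocycle only depends on coordinates `< n` for `k ≤ n`. -/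
lemma cocycle_factor (n : ℕ) :
    ∀ k ≤ n, ∀ x : ℕ, ∃ g : (↥(Finset.range n) → ℝ) → ℕ, Measurable g ∧
      ∀ q : ℕ → ℝ, bdCocycle γ₁ γ₂ q k x = g (fun i => q i.1) := by
  intro k
  induction k with
  | zero => exact fun _ x => ⟨fun _ => x, measurable_const, fun q => rfl⟩
  | succ k ih =>
    intro hk x
    obtain ⟨g, hg, hgq⟩ := ih (by omega) x
    have hkmem : k ∈ Finset.range n := Finset.mem_range.2 (by omega)
    refine ⟨fun r => bdStep γ₁ γ₂ (r ⟨k, hkmem⟩) (g r),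
      measurable_bdStep_comp (measurable_pi_apply _) hg, fun q => ?_⟩
    rw [bdCocycle_succ, hgq]

end BDaux2
namespace BDaux3
open BDaux BDaux2 MeasureTheory ProbabilityTheory

variable {P : Measure (ℕ → ℝ)} [IsProbabilityMeasure P]

lemma eval_measure (hUnif : ∀ n : ℕ, P.map (fun q => q n) = volume.restrict (Set.Icc (0:ℝ) 1))
    (n : ℕ) {s : Set ℝ} (hs : MeasurableSet s) :
    P ((fun q : ℕ → ℝ => q n) ⁻¹' s) = volume (s ∩ Set.Icc (0:ℝ) 1) := by
  have := hUnif n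
  rw [← Measure.restrict_apply' measurableSet_Icc, ← this,
    Measure.map_apply (measurable_pi_apply n) hs]

lemma eval_Iio (hUnif : ∀ n : ℕ, P.map (fun q => q n) = volume.restrict (Set.Icc (0:ℝ) 1))
    (n : ℕ) {b : ℝ} (hb0 : 0 ≤ b) (hb1 : b ≤ 1) :
    P ((fun q : ℕ → ℝ => q n) ⁻¹' Set.Iio b) = ENNReal.ofReal b := by
  rw [eval_measure hUnif n measurableSet_Iio]
  have : Set.Iio b ∩ Set.Icc (0:ℝ) 1 = Set.Ico 0 b := by
    ext t
    simp only [Set.mem_inter_iff, Set.mem_Iio, Set.mem_Icc, Set.mem_Ico]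
    constructor
    · rintro ⟨h1, h2, h3⟩; exact ⟨h2, h1⟩
    · rintro ⟨h1, h2⟩; exact ⟨h2, h1, by linarith⟩
  rw [this, Real.volume_Ico, sub_zero]

lemma eval_Ico (hUnif : ∀ n : ℕ, P.map (fun q => q n) = volume.restrict (Set.Icc (0:ℝ) 1))
    (n : ℕ) {b a : ℝ} (hb0 : 0 ≤ b) (hba : b ≤ a) (ha1 : a ≤ 1) :
    P ((fun q : ℕ → ℝ => q n) ⁻¹' Set.Ico b a) = ENNReal.ofReal (a - b) := by
  rw [eval_measure hUnif n measurableSet_Ico]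
  have : Set.Ico b a ∩ Set.Icc (0:ℝ) 1 = Set.Ico b a := by
    apply Set.inter_eq_left.2
    intro t ht
    simp only [Set.mem_Ico] at ht
    exact ⟨by linarith [ht.1], by linarith [ht.2]⟩
  rw [this, Real.volume_Ico]

lemma eval_Ici (hUnif : ∀ n : ℕ, P.map (fun q => q n) = volume.restrict (Set.Icc (0:ℝ) 1))
    (n : ℕ) {a : ℝ} (ha0 : 0 ≤ a) (ha1 : a ≤ 1) :
    P ((fun q : ℕ → ℝ => q n) ⁻¹' Set.Ici a) = ENNReal.ofReal (1 - a) := by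
  rw [eval_measure hUnif n measurableSet_Ici]
  have : Set.Ici a ∩ Set.Icc (0:ℝ) 1 = Set.Icc a 1 := by
    ext t
    simp only [Set.mem_inter_iff, Set.mem_Ici, Set.mem_Icc]
    constructor
    · rintro ⟨h1, h2, h3⟩; exact ⟨h1, h3⟩
    · rintro ⟨h1, h2⟩; exact ⟨h1, by linarith, h2⟩
  rw [this, Real.volume_Icc]

lemma indep_eval
    (hIndep : iIndepFun (fun n (q : ℕ → ℝ) => q n) P)
    (n : ℕ) {A : Set (ℕ → ℝ)} {M : Set (↥(Finset.range n) → ℝ)} (hM : MeasurableSet M)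
    (hA : A = (fun (q : ℕ → ℝ) (i : ↥(Finset.range n)) => q i.1) ⁻¹' M)
    {s : Set ℝ} (hs : MeasurableSet s) :
    P (A ∩ (fun q : ℕ → ℝ => q n) ⁻¹' s) = P A * P ((fun q : ℕ → ℝ => q n) ⁻¹' s) := by
  have hdisj : Disjoint (Finset.range n) ({n} : Finset ℕ) := by
    simp [Finset.disjoint_singleton_right]
  have hind := hIndep.indepFun_finset (Finset.range n) {n} hdisj
    (fun i => measurable_pi_apply i)
  have hmem : n ∈ ({n} : Finset ℕ) := Finset.mem_singleton_self n
  set σ : (ℕ → ℝ) → (↥({n} : Finset ℕ) → ℝ) := fun q i => q i.1 with hσ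
  have hkey := (indepFun_iff_measure_inter_preimage_eq_mul.1 hind) M
    ((fun v : ↥({n} : Finset ℕ) → ℝ => v ⟨n, hmem⟩) ⁻¹' s) hM
    ((measurable_pi_apply _) hs)
  have h2 : σ ⁻¹' ((fun v : ↥({n} : Finset ℕ) → ℝ => v ⟨n, hmem⟩) ⁻¹' s)
      = (fun q : ℕ → ℝ => q n) ⁻¹' s := rfl
  rw [hA]
  rw [← h2]
  exact hkey

end BDaux3
namespace BDmain
open BDaux BDaux2 BDaux3 MeasureTheory ProbabilityTheory

variable (γ₁ γ₂ : ℝ) (x₀ y₀ : ℕ)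

/-- the event that the gap has stayed ≥ 2 up to time `n` -/
def Esets (n : ℕ) : Set (ℕ → ℝ) :=
  {q | ∀ k ≤ n, bdCocycle γ₁ γ₂ q k x₀ + 2 ≤ bdCocycle γ₁ γ₂ q k y₀}

/-- the Lyapunov function -/
noncomputable def hfun (n : ℕ) (q : ℕ → ℝ) : ℝ :=
  (bdCocycle γ₁ γ₂ q n x₀ : ℝ) +
    bdC γ₁ γ₂ * ((bdCocycle γ₁ γ₂ q n y₀ : ℝ) - (bdCocycle γ₁ γ₂ q n x₀ : ℝ))

/-- the part of `Esets n` where the two chains sit at `x` and `y` -/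
def Apart (n x y : ℕ) : Set (ℕ → ℝ) :=
  Esets γ₁ γ₂ x₀ y₀ n ∩ (fun q => bdCocycle γ₁ γ₂ q n x₀) ⁻¹' {x}
    ∩ (fun q => bdCocycle γ₁ γ₂ q n y₀) ⁻¹' {y}

lemma measurable_cocycle (n x : ℕ) :
    Measurable (fun q : ℕ → ℝ => bdCocycle γ₁ γ₂ q n x) := by
  induction n with
  | zero => exact measurable_const
  | succ n ih => exact measurable_bdStep_comp (measurable_pi_apply n) ih

lemma measurable_pairset (k : ℕ) :
    MeasurableSet {q : ℕ → ℝ | bdCocycle γ₁ γ₂ q k x₀ + 2 ≤ bdCocycle γ₁ γ₂ q k y₀} := by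
  have : {q : ℕ → ℝ | bdCocycle γ₁ γ₂ q k x₀ + 2 ≤ bdCocycle γ₁ γ₂ q k y₀} =
      (fun q => (bdCocycle γ₁ γ₂ q k x₀, bdCocycle γ₁ γ₂ q k y₀)) ⁻¹'
        {p : ℕ × ℕ | p.1 + 2 ≤ p.2} := rfl
  rw [this]
  exact ((measurable_cocycle γ₁ γ₂ k x₀).prodMk (measurable_cocycle γ₁ γ₂ k y₀))
    ((Set.to_countable _).measurableSet)

lemma measurable_Esets (n : ℕ) : MeasurableSet (Esets γ₁ γ₂ x₀ y₀ n) := by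
  have : Esets γ₁ γ₂ x₀ y₀ n = ⋂ (k : ℕ) (_ : k ≤ n),
      {q : ℕ → ℝ | bdCocycle γ₁ γ₂ q k x₀ + 2 ≤ bdCocycle γ₁ γ₂ q k y₀} := by
    ext q; simp [Esets]
  rw [this]
  exact MeasurableSet.iInter fun k => MeasurableSet.iInter fun _ =>
    measurable_pairset γ₁ γ₂ x₀ y₀ k

lemma measurable_Apart (n x y : ℕ) : MeasurableSet (Apart γ₁ γ₂ x₀ y₀ n x y) :=
  ((measurable_Esets γ₁ γ₂ x₀ y₀ n).inter
    ((measurable_cocycle γ₁ γ₂ n x₀) (measurableSet_singleton x))).inter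
    ((measurable_cocycle γ₁ γ₂ n y₀) (measurableSet_singleton y))

lemma Apart_factor (n x y : ℕ) :
    ∃ M : Set (↥(Finset.range n) → ℝ), MeasurableSet M ∧
      Apart γ₁ γ₂ x₀ y₀ n x y =
        (fun (q : ℕ → ℝ) (i : ↥(Finset.range n)) => q i.1) ⁻¹' M := by
  have hfac : ∀ k, ∃ g : (↥(Finset.range n) → ℝ) → ℕ × ℕ, Measurable g ∧
      ∀ q : ℕ → ℝ, k ≤ n →
        (bdCocycle γ₁ γ₂ q k x₀, bdCocycle γ₁ γ₂ q k y₀) = g (fun i => q i.1) := by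
    intro k
    by_cases hk : k ≤ n
    · obtain ⟨gx, hgx, hx⟩ := cocycle_factor (γ₁ := γ₁) (γ₂ := γ₂) n k hk x₀
      obtain ⟨gy, hgy, hy⟩ := cocycle_factor (γ₁ := γ₁) (γ₂ := γ₂) n k hk y₀
      exact ⟨fun r => (gx r, gy r), hgx.prodMk hgy, fun q _ => by rw [hx, hy]⟩
    · exact ⟨fun _ => (0, 0), measurable_const, fun q hk' => absurd hk' hk⟩
  choose g hgm hgq using hfac
  refine ⟨{r | (∀ k ≤ n, (g k r).1 + 2 ≤ (g k r).2) ∧ g n r = (x, y)}, ?_, ?_⟩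
  · have : {r : ↥(Finset.range n) → ℝ | (∀ k ≤ n, (g k r).1 + 2 ≤ (g k r).2)
        ∧ g n r = (x, y)} =
        (⋂ (k : ℕ) (_ : k ≤ n), (g k) ⁻¹' {p : ℕ × ℕ | p.1 + 2 ≤ p.2})
          ∩ (g n) ⁻¹' {(x, y)} := by
      ext r; simp [Set.mem_iInter]
    rw [this]
    exact (MeasurableSet.iInter fun k => MeasurableSet.iInter fun _ =>
      (hgm k) ((Set.to_countable _).measurableSet)).inter
      ((hgm n) (measurableSet_singleton _))
  · ext q
    simp only [Apart, Esets, Set.mem_inter_iff, Set.mem_setOf_eq, Set.mem_preimage,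
      Set.mem_singleton_iff]
    constructor
    · rintro ⟨⟨hE, hX⟩, hY⟩
      constructor
      · intro k hk
        rw [← hgq k q hk]
        exact hE k hk
      · rw [← hgq n q le_rfl, hX, hY]
    · rintro ⟨hE, hXY⟩
      have hn := (hgq n q le_rfl).trans hXY
      rw [Prod.ext_iff] at hn
      refine ⟨⟨fun k hk => ?_, hn.1⟩, hn.2⟩
      have := hE k hk
      rw [← hgq k q hk] at this
      exact this

lemma cocycle_cast_le (q : ℕ → ℝ) (n x : ℕ) :
    ((bdCocycle γ₁ γ₂ q n x : ℝ)) ≤ (x : ℝ) + n := by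
  have := bdCocycle_le (γ₁ := γ₁) (γ₂ := γ₂) q n x
  exact_mod_cast this

lemma integrable_hfun (hγ₁ : 0 < γ₁) (hγ₂ : 0 < γ₂) (P : Measure (ℕ → ℝ))
    [IsProbabilityMeasure P] (n : ℕ) : Integrable (hfun γ₁ γ₂ x₀ y₀ n) P := by
  have hC := (bdC_pos hγ₁ hγ₂).le
  have hmeas : Measurable (hfun γ₁ γ₂ x₀ y₀ n) := by
    apply Measurable.add
    · exact measurable_from_top.comp (measurable_cocycle γ₁ γ₂ n x₀)
    · exact ((measurable_from_top.comp (measurable_cocycle γ₁ γ₂ n y₀)).sub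
        (measurable_from_top.comp (measurable_cocycle γ₁ γ₂ n x₀))).const_mul _
  refine (integrable_const ((x₀ + n : ℝ) + bdC γ₁ γ₂ * ((y₀ + n : ℝ) + (x₀ + n : ℝ)))).mono'
    hmeas.aestronglyMeasurable (Filter.Eventually.of_forall fun q => ?_)
  have h1 : ((bdCocycle γ₁ γ₂ q n x₀ : ℝ)) ≤ (x₀ : ℝ) + n := cocycle_cast_le γ₁ γ₂ q n x₀
  have h2 : ((bdCocycle γ₁ γ₂ q n y₀ : ℝ)) ≤ (y₀ : ℝ) + n := cocycle_cast_le γ₁ γ₂ q n y₀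
  have h3 : (0:ℝ) ≤ (bdCocycle γ₁ γ₂ q n x₀ : ℝ) := Nat.cast_nonneg _
  have h4 : (0:ℝ) ≤ (bdCocycle γ₁ γ₂ q n y₀ : ℝ) := Nat.cast_nonneg _
  rw [Real.norm_eq_abs, hfun, abs_le]
  constructor
  · nlinarith
  · nlinarith

end BDmain
namespace BDmain
open BDaux BDaux2 BDaux3 MeasureTheory ProbabilityTheory

variable {γ₁ γ₂ : ℝ} {x₀ y₀ : ℕ}

lemma integral_Apart (hγ₁ : 0 < γ₁) (hγ₂ : 0 < γ₂) (P : Measure (ℕ → ℝ))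
    [IsProbabilityMeasure P]
    (hIndep : iIndepFun (fun n (q : ℕ → ℝ) => q n) P)
    (hUnif : ∀ n : ℕ, P.map (fun q => q n) = volume.restrict (Set.Icc (0:ℝ) 1))
    (n x y : ℕ) :
    ∫ q in Apart γ₁ γ₂ x₀ y₀ n x y,
        (hfun γ₁ γ₂ x₀ y₀ (n+1) q - hfun γ₁ γ₂ x₀ y₀ n q) ∂P
      ≤ -(1/2) * (P (Apart γ₁ γ₂ x₀ y₀ n x y)).toReal := by
  set C := bdC γ₁ γ₂ with hCdef
  set A := Apart γ₁ γ₂ x₀ y₀ n x y with hAdef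
  set f : (ℕ → ℝ) → ℝ := fun q => hfun γ₁ γ₂ x₀ y₀ (n+1) q - hfun γ₁ γ₂ x₀ y₀ n q with hfdef
  rcases Set.eq_empty_or_nonempty A with hemp | ⟨q₀, hq₀⟩
  · rw [hemp]; simp
  have hxy : x + 2 ≤ y := by
    have h1 : bdCocycle γ₁ γ₂ q₀ n x₀ + 2 ≤ bdCocycle γ₁ γ₂ q₀ n y₀ := hq₀.1.1 n le_rfl
    have h2 : bdCocycle γ₁ γ₂ q₀ n x₀ = x := hq₀.1.2
    have h3 : bdCocycle γ₁ γ₂ q₀ n y₀ = y := hq₀.2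
    omega
  have hy1 : 1 ≤ y := by omega
  set a := thr γ₁ γ₂ x with hadef
  set b := thr γ₁ γ₂ y with hbdef
  have hba : b ≤ a := thr_anti hγ₁ hγ₂ (by omega)
  have hb0 : 0 < b := thr_pos hγ₁ hγ₂ y
  have ha0 : 0 < a := thr_pos hγ₁ hγ₂ x
  have ha1 : a ≤ 1 := thr_le_one hγ₁ hγ₂ x
  have hb1 : b ≤ 1 := le_trans hba ha1
  have hfint : Integrable f P :=
    (integrable_hfun γ₁ γ₂ x₀ y₀ hγ₁ hγ₂ P (n+1)).sub
      (integrable_hfun γ₁ γ₂ x₀ y₀ hγ₁ hγ₂ P n)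
  set A₁ := A ∩ (fun q : ℕ → ℝ => q n) ⁻¹' Set.Iio b with hA₁
  set A₂ := A ∩ (fun q : ℕ → ℝ => q n) ⁻¹' Set.Ico b a with hA₂
  set A₃ := A ∩ (fun q : ℕ → ℝ => q n) ⁻¹' Set.Ici a with hA₃
  have hmA : MeasurableSet A := measurable_Apart γ₁ γ₂ x₀ y₀ n x y
  have hmA₁ : MeasurableSet A₁ := hmA.inter ((measurable_pi_apply n) measurableSet_Iio)
  have hmA₂ : MeasurableSet A₂ := hmA.inter ((measurable_pi_apply n) measurableSet_Ico)
  have hmA₃ : MeasurableSet A₃ := hmA.inter ((measurable_pi_apply n) measurableSet_Ici)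
  have hsplit : A = (A₁ ∪ A₂) ∪ A₃ := by
    ext q
    simp only [hA₁, hA₂, hA₃, Set.mem_union, Set.mem_inter_iff, Set.mem_preimage,
      Set.mem_Iio, Set.mem_Ico, Set.mem_Ici]
    constructor
    · intro hq
      rcases lt_or_ge (q n) b with h | h
      · exact Or.inl (Or.inl ⟨hq, h⟩)
      rcases lt_or_ge (q n) a with h' | h'
      · exact Or.inl (Or.inr ⟨hq, h, h'⟩)
      · exact Or.inr ⟨hq, h'⟩
    · rintro ((⟨hq, _⟩ | ⟨hq, _⟩) | ⟨hq, _⟩) <;> exact hq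
  have hd1 : Disjoint A₁ A₂ := by
    rw [Set.disjoint_iff]
    rintro q ⟨⟨_, h1⟩, ⟨_, h2, _⟩⟩
    exact absurd h1 (not_lt.2 h2)
  have hd2 : Disjoint (A₁ ∪ A₂) A₃ := by
    rw [Set.disjoint_iff]
    rintro q ⟨h12, _, h3⟩
    rcases h12 with ⟨_, h1⟩ | ⟨_, _, h2⟩
    · exact absurd (lt_of_lt_of_le h1 hba) (not_lt.2 h3)
    · exact absurd h2 (not_lt.2 h3)
  -- pointwise values
  have hXe : ∀ q : ℕ → ℝ, q ∈ A → bdCocycle γ₁ γ₂ q n x₀ = x := fun q hq => hq.1.2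
  have hYe : ∀ q : ℕ → ℝ, q ∈ A → bdCocycle γ₁ γ₂ q n y₀ = y := fun q hq => hq.2
  have hXup : ∀ q : ℕ → ℝ, q ∈ A → q n < a → bdCocycle γ₁ γ₂ q (n+1) x₀ = x + 1 := by
    intro q hq hqa
    rw [bdCocycle_succ, hXe q hq, bdStep_up hqa]
  have hYup : ∀ q : ℕ → ℝ, q ∈ A → q n < b → bdCocycle γ₁ γ₂ q (n+1) y₀ = y + 1 := by
    intro q hq hqb
    rw [bdCocycle_succ, hYe q hq, bdStep_up hqb]
  have hXdn : ∀ q : ℕ → ℝ, q ∈ A → a ≤ q n → bdCocycle γ₁ γ₂ q (n+1) x₀ = x - 1 := by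
    intro q hq hqa
    rw [bdCocycle_succ, hXe q hq, bdStep_down hqa]
  have hYdn : ∀ q : ℕ → ℝ, q ∈ A → b ≤ q n → bdCocycle γ₁ γ₂ q (n+1) y₀ = y - 1 := by
    intro q hq hqb
    rw [bdCocycle_succ, hYe q hq, bdStep_down hqb]
  have hv1 : Set.EqOn f (fun _ => (1:ℝ)) A₁ := by
    intro q hq
    have hqn : q n < b := hq.2
    have h1 := hXup q hq.1 (lt_of_lt_of_le hqn hba)
    have h2 := hYup q hq.1 hqn
    simp only [hfdef, hfun, h1, h2, hXe q hq.1, hYe q hq.1]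
    push_cast
    ring
  have hv2 : Set.EqOn f (fun _ => (1 - 2*C : ℝ)) A₂ := by
    intro q hq
    have hqn : q n ∈ Set.Ico b a := hq.2
    have h1 := hXup q hq.1 hqn.2
    have h2 := hYdn q hq.1 hqn.1
    simp only [hfdef, hfun, h1, h2, hXe q hq.1, hYe q hq.1]
    push_cast [Nat.cast_sub hy1]
    ring
  have hv3 : Set.EqOn f (fun _ => (if x = 0 then -C else -1 : ℝ)) A₃ := by
    intro q hq
    have hqn : a ≤ q n := hq.2
    have h1 := hXdn q hq.1 hqn
    have h2 := hYdn q hq.1 (le_trans hba hqn)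
    by_cases hx0 : x = 0
    · have h1' : bdCocycle γ₁ γ₂ q (n+1) x₀ = 0 := by rw [h1, hx0]
      simp only [hfdef, hfun, h1', h2, hXe q hq.1, hYe q hq.1, hx0, if_pos]
      push_cast [Nat.cast_sub hy1]
      ring
    · have hx1 : 1 ≤ x := by omega
      simp only [hfdef, hfun, h1, h2, hXe q hq.1, hYe q hq.1, if_neg hx0]
      push_cast [Nat.cast_sub hy1, Nat.cast_sub hx1]
      ring
  -- measures of the pieces
  obtain ⟨M, hM, hAM⟩ := Apart_factor γ₁ γ₂ x₀ y₀ n x y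
  have hP1 : P A₁ = P A * ENNReal.ofReal b := by
    rw [hA₁, hAdef, indep_eval hIndep n hM hAM measurableSet_Iio, ← hAdef,
      eval_Iio hUnif n hb0.le hb1]
  have hP2 : P A₂ = P A * ENNReal.ofReal (a - b) := by
    rw [hA₂, hAdef, indep_eval hIndep n hM hAM measurableSet_Ico, ← hAdef,
      eval_Ico hUnif n hb0.le hba ha1]
  have hP3 : P A₃ = P A * ENNReal.ofReal (1 - a) := by
    rw [hA₃, hAdef, indep_eval hIndep n hM hAM measurableSet_Ici, ← hAdef,
      eval_Ici hUnif n ha0.le ha1]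
  have ht1 : (P A₁).toReal = (P A).toReal * b := by
    rw [hP1, ENNReal.toReal_mul, ENNReal.toReal_ofReal hb0.le]
  have ht2 : (P A₂).toReal = (P A).toReal * (a - b) := by
    rw [hP2, ENNReal.toReal_mul, ENNReal.toReal_ofReal (by linarith : (0:ℝ) ≤ a - b)]
  have ht3 : (P A₃).toReal = (P A).toReal * (1 - a) := by
    rw [hP3, ENNReal.toReal_mul, ENNReal.toReal_ofReal (by linarith : (0:ℝ) ≤ 1 - a)]
  -- put the integral together
  have hint : ∫ q in A, f q ∂P =
      (P A).toReal * (b * 1 + (a - b) * (1 - 2*C) + (1 - a) * (if x = 0 then -C else -1)) := by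
    calc ∫ q in A, f q ∂P = ∫ q in (A₁ ∪ A₂) ∪ A₃, f q ∂P := by rw [← hsplit]
      _ = (∫ q in A₁ ∪ A₂, f q ∂P) + ∫ q in A₃, f q ∂P :=
        setIntegral_union hd2 hmA₃ hfint.integrableOn hfint.integrableOn
      _ = ((∫ q in A₁, f q ∂P) + ∫ q in A₂, f q ∂P) + ∫ q in A₃, f q ∂P := by
        rw [setIntegral_union hd1 hmA₂ hfint.integrableOn hfint.integrableOn]
      _ = (P A).toReal * (b * 1 + (a - b) * (1 - 2*C)
            + (1 - a) * (if x = 0 then -C else -1)) := by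
        rw [setIntegral_congr_fun hmA₁ hv1, setIntegral_congr_fun hmA₂ hv2,
          setIntegral_congr_fun hmA₃ hv3, setIntegral_const, setIntegral_const,
          setIntegral_const, measureReal_def, measureReal_def, measureReal_def, ht1, ht2, ht3]
        simp only [smul_eq_mul]
        ring
  rw [hint]
  have hdrift := drift_scalar hγ₁ hγ₂ (x := x) (y := y) hxy
  rw [← hadef, ← hbdef, ← hCdef] at hdrift
  calc (P A).toReal * (b * 1 + (a - b) * (1 - 2*C) + (1 - a) * (if x = 0 then -C else -1))
      ≤ (P A).toReal * (-(1/2)) :=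
        mul_le_mul_of_nonneg_left hdrift ENNReal.toReal_nonneg
    _ = -(1/2) * (P A).toReal := by ring

end BDmain
namespace BDmain
open BDaux BDaux2 BDaux3 MeasureTheory ProbabilityTheory

variable {γ₁ γ₂ : ℝ} {x₀ y₀ : ℕ}

lemma Esets_cover (n : ℕ) : Esets γ₁ γ₂ x₀ y₀ n =
    ⋃ p ∈ (Finset.range (x₀+n+1) ×ˢ Finset.range (y₀+n+1) : Finset (ℕ × ℕ)),
      Apart γ₁ γ₂ x₀ y₀ n p.1 p.2 := by
  ext q
  simp only [Set.mem_iUnion, Finset.mem_product, Finset.mem_range, exists_prop]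
  constructor
  · intro hq
    refine ⟨(bdCocycle γ₁ γ₂ q n x₀, bdCocycle γ₁ γ₂ q n y₀), ⟨?_, ?_⟩, ⟨⟨hq, rfl⟩, rfl⟩⟩
    · have := bdCocycle_le (γ₁ := γ₁) (γ₂ := γ₂) q n x₀; omega
    · have := bdCocycle_le (γ₁ := γ₁) (γ₂ := γ₂) q n y₀; omega
  · rintro ⟨p, _, ⟨⟨hq, _⟩, _⟩⟩
    exact hq

lemma Apart_pairwise (n : ℕ) :
    Set.Pairwise ↑(Finset.range (x₀+n+1) ×ˢ Finset.range (y₀+n+1) : Finset (ℕ × ℕ))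
      (Function.onFun Disjoint (fun p : ℕ × ℕ => Apart γ₁ γ₂ x₀ y₀ n p.1 p.2)) := by
  intro p _ p' _ hne
  rw [Function.onFun, Set.disjoint_left]
  rintro q ⟨⟨_, hX⟩, hY⟩ ⟨⟨_, hX'⟩, hY'⟩
  have e1 : bdCocycle γ₁ γ₂ q n x₀ = p.1 := hX
  have e2 : bdCocycle γ₁ γ₂ q n y₀ = p.2 := hY
  have e3 : bdCocycle γ₁ γ₂ q n x₀ = p'.1 := hX'
  have e4 : bdCocycle γ₁ γ₂ q n y₀ = p'.2 := hY'
  exact hne (Prod.ext (e1 ▸ e3) (e2 ▸ e4))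

lemma step_Esets (hγ₁ : 0 < γ₁) (hγ₂ : 0 < γ₂) (P : Measure (ℕ → ℝ))
    [IsProbabilityMeasure P]
    (hIndep : iIndepFun (fun n (q : ℕ → ℝ) => q n) P)
    (hUnif : ∀ n : ℕ, P.map (fun q => q n) = volume.restrict (Set.Icc (0:ℝ) 1))
    (n : ℕ) :
    ∫ q in Esets γ₁ γ₂ x₀ y₀ n,
        (hfun γ₁ γ₂ x₀ y₀ (n+1) q - hfun γ₁ γ₂ x₀ y₀ n q) ∂P
      ≤ -(1/2) * (P (Esets γ₁ γ₂ x₀ y₀ n)).toReal := by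
  set F := (Finset.range (x₀+n+1) ×ˢ Finset.range (y₀+n+1) : Finset (ℕ × ℕ)) with hF
  have hfint : Integrable (fun q => hfun γ₁ γ₂ x₀ y₀ (n+1) q - hfun γ₁ γ₂ x₀ y₀ n q) P :=
    (integrable_hfun γ₁ γ₂ x₀ y₀ hγ₁ hγ₂ P (n+1)).sub (integrable_hfun γ₁ γ₂ x₀ y₀ hγ₁ hγ₂ P n)
  have hmeasP : P (Esets γ₁ γ₂ x₀ y₀ n) = ∑ p ∈ F, P (Apart γ₁ γ₂ x₀ y₀ n p.1 p.2) := by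
    rw [Esets_cover n]
    exact measure_biUnion_finset (Apart_pairwise n)
      (fun p _ => measurable_Apart γ₁ γ₂ x₀ y₀ n p.1 p.2)
  calc ∫ q in Esets γ₁ γ₂ x₀ y₀ n,
        (hfun γ₁ γ₂ x₀ y₀ (n+1) q - hfun γ₁ γ₂ x₀ y₀ n q) ∂P
      = ∑ p ∈ F, ∫ q in Apart γ₁ γ₂ x₀ y₀ n p.1 p.2,
          (hfun γ₁ γ₂ x₀ y₀ (n+1) q - hfun γ₁ γ₂ x₀ y₀ n q) ∂P := by
        rw [Esets_cover n]
        exact integral_biUnion_finset F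
          (fun p _ => measurable_Apart γ₁ γ₂ x₀ y₀ n p.1 p.2)
          (Apart_pairwise n) (fun p _ => hfint.integrableOn)
    _ ≤ ∑ p ∈ F, -(1/2) * (P (Apart γ₁ γ₂ x₀ y₀ n p.1 p.2)).toReal :=
        Finset.sum_le_sum fun p _ => integral_Apart hγ₁ hγ₂ P hIndep hUnif n p.1 p.2
    _ = -(1/2) * (P (Esets γ₁ γ₂ x₀ y₀ n)).toReal := by
        rw [hmeasP, ENNReal.toReal_sum (fun p _ => measure_ne_top P _), Finset.mul_sum]

lemma hfun_nonneg (hγ₁ : 0 < γ₁) (hγ₂ : 0 < γ₂) (n : ℕ) (q : ℕ → ℝ)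
    (h : bdCocycle γ₁ γ₂ q n x₀ ≤ bdCocycle γ₁ γ₂ q n y₀) :
    0 ≤ hfun γ₁ γ₂ x₀ y₀ n q := by
  have hC := (bdC_pos hγ₁ hγ₂).le
  have h' : ((bdCocycle γ₁ γ₂ q n x₀ : ℝ)) ≤ (bdCocycle γ₁ γ₂ q n y₀ : ℝ) := by exact_mod_cast h
  have h0 : (0:ℝ) ≤ (bdCocycle γ₁ γ₂ q n x₀ : ℝ) := Nat.cast_nonneg _
  rw [hfun]
  nlinarith

lemma main_null (hγ₁ : 0 < γ₁) (hγ₂ : 0 < γ₂) (P : Measure (ℕ → ℝ))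
    [IsProbabilityMeasure P]
    (hIndep : iIndepFun (fun n (q : ℕ → ℝ) => q n) P)
    (hUnif : ∀ n : ℕ, P.map (fun q => q n) = volume.restrict (Set.Icc (0:ℝ) 1)) :
    P (⋂ n, Esets γ₁ γ₂ x₀ y₀ n) = 0 := by
  set I : ℕ → ℝ := fun n => ∫ q in Esets γ₁ γ₂ x₀ y₀ n, hfun γ₁ γ₂ x₀ y₀ n q ∂P with hI
  set t : ℝ := (P (⋂ n, Esets γ₁ γ₂ x₀ y₀ n)).toReal with ht
  have htnn : 0 ≤ t := ENNReal.toReal_nonneg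
  -- one-step inequality
  have hstep : ∀ n, I (n+1) + (1/2) * t ≤ I n := by
    intro n
    have hsub : Esets γ₁ γ₂ x₀ y₀ (n+1) ⊆ Esets γ₁ γ₂ x₀ y₀ n :=
      fun q hq k hk => hq k (le_trans hk (Nat.le_succ n))
    have hnn : ∀ q ∈ Esets γ₁ γ₂ x₀ y₀ n, 0 ≤ hfun γ₁ γ₂ x₀ y₀ (n+1) q := by
      intro q hq
      refine hfun_nonneg hγ₁ hγ₂ (n+1) q ?_
      rw [bdCocycle_succ, bdCocycle_succ]
      have hgap : bdCocycle γ₁ γ₂ q n x₀ + 2 ≤ bdCocycle γ₁ γ₂ q n y₀ := hq n le_rfl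
      exact gap_step (q n) hgap
    have h1 : I (n+1) ≤ ∫ q in Esets γ₁ γ₂ x₀ y₀ n, hfun γ₁ γ₂ x₀ y₀ (n+1) q ∂P := by
      apply setIntegral_mono_set
        (integrable_hfun γ₁ γ₂ x₀ y₀ hγ₁ hγ₂ P (n+1)).integrableOn
        ((ae_restrict_iff' (measurable_Esets γ₁ γ₂ x₀ y₀ n)).2 (Filter.Eventually.of_forall hnn))
        (HasSubset.Subset.eventuallyLE hsub)
    have h2 : ∫ q in Esets γ₁ γ₂ x₀ y₀ n,
        (hfun γ₁ γ₂ x₀ y₀ (n+1) q - hfun γ₁ γ₂ x₀ y₀ n q) ∂P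
        = (∫ q in Esets γ₁ γ₂ x₀ y₀ n, hfun γ₁ γ₂ x₀ y₀ (n+1) q ∂P) - I n :=
      integral_sub (integrable_hfun γ₁ γ₂ x₀ y₀ hγ₁ hγ₂ P (n+1)).integrableOn
        (integrable_hfun γ₁ γ₂ x₀ y₀ hγ₁ hγ₂ P n).integrableOn
    have h3 := step_Esets (x₀ := x₀) (y₀ := y₀) hγ₁ hγ₂ P hIndep hUnif n
    have h4 : (1/2) * t ≤ (1/2) * (P (Esets γ₁ γ₂ x₀ y₀ n)).toReal := by
      apply mul_le_mul_of_nonneg_left _ (by norm_num : (0:ℝ) ≤ 1/2)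
      exact ENNReal.toReal_mono (measure_ne_top P _)
        (measure_mono (Set.iInter_subset _ n))
    rw [h2] at h3
    linarith
  have hInn : ∀ n, 0 ≤ I n := by
    intro n
    apply setIntegral_nonneg (measurable_Esets γ₁ γ₂ x₀ y₀ n)
    intro q hq
    exact hfun_nonneg hγ₁ hγ₂ n q (by have := hq n le_rfl; omega)
  have hsum : ∀ n : ℕ, I n + n * ((1/2) * t) ≤ I 0 := by
    intro n
    induction n with
    | zero => simp
    | succ n ih =>
      have := hstep n
      push_cast
      push_cast at ih
      linarith
  have ht0 : t = 0 := by
    by_contra hne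
    have htpos : 0 < t := lt_of_le_of_ne htnn (Ne.symm hne)
    obtain ⟨n, hn⟩ := exists_nat_gt (I 0 / ((1/2) * t))
    have h5 : I 0 < n * ((1/2) * t) := by
      rw [div_lt_iff₀ (by linarith)] at hn
      linarith
    have := hsum n
    have := hInn n
    linarith
  rw [ht] at ht0
  have hne := measure_ne_top P (⋂ n, Esets γ₁ γ₂ x₀ y₀ n)
  exact (ENNReal.toReal_eq_zero_iff _).1 ht0 |>.resolve_right hne

lemma main_gap (hγ₁ : 0 < γ₁) (hγ₂ : 0 < γ₂) (P : Measure (ℕ → ℝ))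
    [IsProbabilityMeasure P]
    (hIndep : iIndepFun (fun n (q : ℕ → ℝ) => q n) P)
    (hUnif : ∀ n : ℕ, P.map (fun q => q n) = volume.restrict (Set.Icc (0:ℝ) 1))
    (hxy : x₀ + 2 ≤ y₀) :
    ∀ᵐ q ∂P, ∃ n : ℕ,
      |(bdCocycle γ₁ γ₂ q n x₀ : ℤ) - (bdCocycle γ₁ γ₂ q n y₀ : ℤ)| ≤ 1 := by
  rw [ae_iff]
  apply measure_mono_null _ (main_null (x₀ := x₀) (y₀ := y₀) hγ₁ hγ₂ P hIndep hUnif)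
  intro q hq
  simp only [Set.mem_setOf_eq, not_exists, not_le] at hq
  simp only [Set.mem_iInter]
  have hclaim : ∀ k, bdCocycle γ₁ γ₂ q k x₀ + 2 ≤ bdCocycle γ₁ γ₂ q k y₀ := by
    intro k
    induction k with
    | zero => simpa using hxy
    | succ k ih =>
      by_contra hcon
      have hle : bdCocycle γ₁ γ₂ q (k+1) x₀ ≤ bdCocycle γ₁ γ₂ q (k+1) y₀ := by
        rw [bdCocycle_succ, bdCocycle_succ]
        exact gap_step (q k) ih
      have habs : |(bdCocycle γ₁ γ₂ q (k+1) x₀ : ℤ) - (bdCocycle γ₁ γ₂ q (k+1) y₀ : ℤ)| ≤ 1 := by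
        rw [abs_le]
        constructor <;> [skip; skip] <;> push_cast <;> omega
      exact absurd (hq (k+1)) (not_lt.2 habs)
  exact fun n k _ => hclaim k

end BDmain

/-- For every pair of initial states `(x₀,y₀)`, the two-point motion of the birth-death chain
driven by iid uniform noise on `[0,1]` reaches the thick diagonal
`𝔻 = {(x,y) : |x − y| ≤ 1}` almost surely in finite time. -/
theorem stmt3 (γ₁ γ₂ : ℝ) (hγ₁ : 0 < γ₁) (hγ₂ : 0 < γ₂)
    (P : Measure (ℕ → ℝ)) [IsProbabilityMeasure P]
    (hIndep : iIndepFun (fun n (q : ℕ → ℝ) => q n) P)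
    (hUnif : ∀ n : ℕ, P.map (fun q => q n) = volume.restrict (Set.Icc (0 : ℝ) 1))
    (x₀ y₀ : ℕ) :
    ∀ᵐ q ∂P, ∃ n : ℕ,
      |(bdCocycle γ₁ γ₂ q n x₀ : ℤ) - (bdCocycle γ₁ γ₂ q n y₀ : ℤ)| ≤ 1 := by
  rcases le_or_gt (x₀ + 2) y₀ with h | h
  · exact BDmain.main_gap hγ₁ hγ₂ P hIndep hUnif h
  rcases le_or_gt (y₀ + 2) x₀ with h' | h'
  · filter_upwards [BDmain.main_gap (x₀ := y₀) (y₀ := x₀) hγ₁ hγ₂ P hIndep hUnif h']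
      with q hn
    obtain ⟨n, hn⟩ := hn
    exact ⟨n, by rwa [abs_sub_comm]⟩
  · refine Filter.Eventually.of_forall fun q => ⟨0, ?_⟩
    have e1 : bdCocycle γ₁ γ₂ q 0 x₀ = x₀ := rfl
    have e2 : bdCocycle γ₁ γ₂ q 0 y₀ = y₀ := rfl
    rw [e1, e2, abs_le]
    constructor <;> push_cast <;> omega
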